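/- Let ε ∈ (0,1), δ ∈ (0,1), Δ > 0, and σ ≥ √(2·ln(1.25/δ))/ε. Then for any two real numbers a and b with |a − b| ≤ Δ, the Gaussian measures gaussianReal a ((Δσ)²) and gaussianReal b ((Δσ)²) are (ε,δ)-indistinguishable: for every measurable set S ⊆ ℝ, (gaussianReal a ((Δσ)²)) S ≤ exp(ε) · (gaussianReal b ((Δσ)²)) S + δ. (This is the Gaussian mechanism: a function f with L2-sensitivity Δ, perturbed by noise N(0, Δ²σ²), is (ε,δ)-differentially private.) -/

import Mathlib

open MeasureTheory ProbabilityTheory Real Set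
open scoped NNReal ENNReal

set_option maxHeartbeats 1000000


lemma std_map_neg : (gaussianReal 0 1).map (fun x : ℝ => -x) = gaussianReal 0 1 := by
  have h := gaussianReal_map_const_mul (μ := 0) (v := 1) (-1 : ℝ)
  have h1 : (⟨(-1:ℝ)^2, sq_nonneg _⟩ : ℝ≥0) * 1 = 1 := by
    ext; norm_num
  have h2 : (fun x : ℝ => -x) = (fun x : ℝ => (-1 : ℝ) * x) := by funext x; ring
  rw [h2]
  simpa [h1] using h

lemma std_Iio (x : ℝ) : gaussianReal 0 1 (Iio x) = gaussianReal 0 1 (Ioi (-x)) := by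
  conv_lhs => rw [← std_map_neg]
  rw [Measure.map_apply measurable_neg measurableSet_Iio]
  congr 1
  ext z
  simp [lt_neg]

lemma std_half : gaussianReal 0 1 (Ioi (0:ℝ)) ≤ 1/2 := by
  have hsym : gaussianReal 0 1 (Iio (0:ℝ)) = gaussianReal 0 1 (Ioi (0:ℝ)) := by
    simpa using std_Iio 0
  have hdisj : Disjoint (Ioi (0:ℝ)) (Iio 0) := by
    simp [Set.disjoint_left]; intro x hx; linarith
  have hadd : gaussianReal 0 1 (Ioi (0:ℝ)) + gaussianReal 0 1 (Iio (0:ℝ)) ≤ 1 := by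
    rw [← measure_union hdisj measurableSet_Iio]
    exact (measure_mono (subset_univ _)).trans (by simp)
  rw [hsym] at hadd
  rw [ENNReal.le_div_iff_mul_le (by norm_num) (by norm_num)]
  calc gaussianReal 0 1 (Ioi (0:ℝ)) * 2 = gaussianReal 0 1 (Ioi (0:ℝ)) + gaussianReal 0 1 (Ioi (0:ℝ)) := by ring
  _ ≤ 1 := hadd

lemma std_shift (m : ℝ) : gaussianReal m 1 (Ioi m) = gaussianReal 0 1 (Ioi (0:ℝ)) := by
  have h := gaussianReal_map_add_const (μ := 0) (v := 1) m
  rw [zero_add] at h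
  rw [← h, Measure.map_apply (measurable_add_const m) measurableSet_Ioi]
  congr 1
  ext z
  simp

lemma tail_pos {s : ℝ} (hs : 0 ≤ s) :
    gaussianReal 0 1 (Ioi s) ≤ ENNReal.ofReal (rexp (-s^2/2) / 2) := by
  have h1 : (1 : ℝ≥0) ≠ 0 := one_ne_zero
  rw [gaussianReal_apply 0 h1 (Ioi s)]
  have hb : ∀ x ∈ Ioi s, gaussianPDF 0 1 x ≤ ENNReal.ofReal (rexp (-s^2/2)) * gaussianPDF s 1 x := by
    intro x hx
    simp only [gaussianPDF]
    rw [← ENNReal.ofReal_mul (exp_nonneg _)]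
    apply ENNReal.ofReal_le_ofReal
    simp only [gaussianPDFReal]
    have hx' : s ≤ x := le_of_lt hx
    push_cast
    have key : rexp (-(x - 0)^2 / (2*1)) ≤ rexp (-s^2/2) * rexp (-(x-s)^2/(2*1)) := by
      rw [← Real.exp_add]
      apply Real.exp_le_exp.2
      nlinarith [sq_nonneg (x - s)]
    calc (√(2 * π * 1))⁻¹ * rexp (-(x - 0)^2 / (2*1))
        ≤ (√(2 * π * 1))⁻¹ * (rexp (-s^2/2) * rexp (-(x-s)^2/(2*1))) := by
          gcongr
      _ = rexp (-s^2/2) * ((√(2 * π * 1))⁻¹ * rexp (-(x-s)^2/(2*1))) := by ring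
  calc ∫⁻ x in Ioi s, gaussianPDF 0 1 x
      ≤ ∫⁻ x in Ioi s, ENNReal.ofReal (rexp (-s^2/2)) * gaussianPDF s 1 x :=
        setLIntegral_mono ((measurable_gaussianPDF s 1).const_mul _) hb
    _ = ENNReal.ofReal (rexp (-s^2/2)) * ∫⁻ x in Ioi s, gaussianPDF s 1 x :=
        lintegral_const_mul _ (measurable_gaussianPDF s 1)
    _ = ENNReal.ofReal (rexp (-s^2/2)) * gaussianReal s 1 (Ioi s) := by
        rw [gaussianReal_apply s h1 (Ioi s)]
    _ ≤ ENNReal.ofReal (rexp (-s^2/2)) * (1/2) := by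
        gcongr
        rw [std_shift]; exact std_half
    _ = ENNReal.ofReal (rexp (-s^2/2) / 2) := by
        rw [ENNReal.ofReal_div_of_pos (by norm_num)]
        congr
        simp [ENNReal.ofReal_ofNat]

lemma tail_neg (s : ℝ) :
    gaussianReal 0 1 (Ioi s) ≤ 1/2 + ENNReal.ofReal ((-s) / Real.sqrt (2 * π)) := by
  have h1 : (1 : ℝ≥0) ≠ 0 := one_ne_zero
  have hsub : Ioi s ⊆ Ioc s 0 ∪ Ioi (0:ℝ) := by
    intro x hx
    rcases le_or_gt x 0 with h | h
    · exact Or.inl ⟨hx, h⟩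
    · exact Or.inr h
  calc gaussianReal 0 1 (Ioi s) ≤ gaussianReal 0 1 (Ioc s 0 ∪ Ioi 0) := measure_mono hsub
    _ ≤ gaussianReal 0 1 (Ioc s 0) + gaussianReal 0 1 (Ioi 0) := measure_union_le _ _
    _ ≤ ENNReal.ofReal ((-s) / Real.sqrt (2 * π)) + 1/2 := by
        apply add_le_add _ std_half
        rw [gaussianReal_apply 0 h1 _]
        have hb : ∀ x ∈ Ioc s 0, gaussianPDF 0 1 x ≤ ENNReal.ofReal ((Real.sqrt (2*π))⁻¹) := by
          intro x _
          simp only [gaussianPDF]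
          apply ENNReal.ofReal_le_ofReal
          simp only [gaussianPDFReal]
          push_cast
          calc (√(2 * π * 1))⁻¹ * rexp (-(x - 0)^2 / (2*1))
              ≤ (√(2 * π * 1))⁻¹ * 1 := by
                gcongr
                exact Real.exp_le_one_iff.2 (by nlinarith [sq_nonneg (x - 0)])
            _ = (√(2 * π))⁻¹ := by rw [mul_one, mul_one]
        calc ∫⁻ x in Ioc s 0, gaussianPDF 0 1 x
            ≤ ∫⁻ _ in Ioc s 0, ENNReal.ofReal ((Real.sqrt (2*π))⁻¹) :=
              setLIntegral_mono measurable_const hb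
          _ = ENNReal.ofReal ((Real.sqrt (2*π))⁻¹) * volume (Ioc s 0) := by
              rw [setLIntegral_const]
          _ = ENNReal.ofReal ((Real.sqrt (2*π))⁻¹) * ENNReal.ofReal (0 - s) := by
              rw [Real.volume_Ioc]
          _ = ENNReal.ofReal ((-s) / Real.sqrt (2 * π)) := by
              rw [← ENNReal.ofReal_mul (by positivity)]
              congr 1
              ring
    _ = 1/2 + ENNReal.ofReal ((-s) / Real.sqrt (2 * π)) := add_comm _ _

lemma thresh {t u σ ε Δ : ℝ} (ht : t = Δ*σ) (hσ : 0 < σ) (hΔ : 0 < Δ) (hε : 0 < ε)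
    (hu : 0 < u) (huΔ : u ≤ Δ) :
    σ*ε - 1/(2*σ) ≤ (2*t^2*ε - u^2)/(2*t*u) := by
  subst ht
  rw [le_div_iff₀ (by positivity)]
  have key : (σ*ε - 1/(2*σ)) * (2*(Δ*σ)*u) = 2*Δ*σ^2*ε*u - Δ*u := by
    field_simp
  rw [key]
  nlinarith [mul_nonneg (sub_nonneg.2 huΔ) (by positivity : (0:ℝ) ≤ 2*Δ*σ^2*ε + u)]

lemma final_tail {ε δ σ : ℝ} (hε : 0 < ε) (hε1 : ε < 1) (hδ : 0 < δ) (hδ1 : δ < 1)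
    (hσ : Real.sqrt (2 * Real.log (1.25/δ)) / ε ≤ σ) :
    gaussianReal 0 1 (Ioi (σ*ε - 1/(2*σ))) ≤ ENNReal.ofReal δ := by
  rw [show (1.25:ℝ) = 5/4 from by norm_num] at hσ
  have hq : (1:ℝ) < 5/4/δ := (one_lt_div hδ).2 (by linarith)
  have hqpos : (0:ℝ) < 5/4/δ := by linarith
  have hlog : 0 < Real.log (5/4/δ) := Real.log_pos hq
  obtain ⟨L, hLdef⟩ : ∃ L, L = Real.sqrt (2 * Real.log (5/4/δ)) := ⟨_, rfl⟩
  rw [← hLdef] at hσ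
  have hL2 : L^2 = 2 * Real.log (5/4/δ) := by rw [hLdef]; exact Real.sq_sqrt (by positivity)
  have hL : 0 < L := by rw [hLdef]; exact Real.sqrt_pos.2 (by positivity)
  have hσε : L ≤ σ*ε := by rw [div_le_iff₀ hε] at hσ; linarith
  have hσpos : 0 < σ := lt_of_lt_of_le (div_pos hL hε) hσ
  have hLσ : L ≤ σ := le_trans (by rw [le_div_iff₀ hε]; nlinarith) hσ
  have hinv : 1/(2*σ) ≤ 1/(2*L) := by
    apply one_div_le_one_div_of_le (by linarith) (by linarith)
  have hs : L - 1/(2*L) ≤ σ*ε - 1/(2*σ) := by linarith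
  have he2 : rexp ((1:ℝ)/2) * rexp ((1:ℝ)/2) = rexp 1 := by
    rw [← Real.exp_add]; norm_num
  have heU : rexp ((1:ℝ)/2) < 1649/1000 := by
    nlinarith [Real.exp_one_lt_d9, Real.exp_pos ((1:ℝ)/2), he2]
  rcases le_or_gt 1 L with hL1 | hL1
  · -- Case A : 1 ≤ L
    have hinvL : 1/(2*L) ≤ 1/2 := by
      rw [div_le_div_iff₀ (by linarith) (by norm_num)]; linarith
    have hs0 : (0:ℝ) ≤ σ*ε - 1/(2*σ) := by linarith
    refine (tail_pos hs0).trans (ENNReal.ofReal_le_ofReal ?_)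
    obtain ⟨s, hsdef⟩ : ∃ s, s = σ*ε - 1/(2*σ) := ⟨_, rfl⟩
    rw [← hsdef]
    rw [← hsdef] at hs hs0
    have hsq : L^2 - 1 ≤ s^2 := by
      have h2 : (0:ℝ) ≤ L - 1/(2*L) := by linarith
      have h3 : (L - 1/(2*L))^2 ≤ s^2 := pow_le_pow_left₀ h2 hs 2
      have h4 : L^2 - 1 ≤ (L - 1/(2*L))^2 := by
        have he : (L - 1/(2*L))^2 = L^2 - 1 + 1/(4*L^2) := by field_simp; ring
        have hp : (0:ℝ) < 1/(4*L^2) := by positivity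
        linarith
      linarith
    have hexp : rexp (-s^2/2) ≤ rexp (1/2) * (δ*(4/5)) := by
      have h5 : -s^2/2 ≤ 1/2 - Real.log (5/4/δ) := by
        rw [hL2] at hsq; linarith
      calc rexp (-s^2/2) ≤ rexp (1/2 - Real.log (5/4/δ)) := Real.exp_le_exp.2 h5
        _ = rexp (1/2) * (δ*(4/5)) := by
            rw [Real.exp_sub, Real.exp_log hqpos]
            field_simp
    have hEδ := mul_lt_mul_of_pos_right heU hδ
    calc rexp (-s^2/2)/2 ≤ (rexp (1/2) * (δ*(4/5)))/2 := by linarith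
      _ ≤ δ := by nlinarith
  · -- Case B : L < 1
    have hδ58 : (758:ℝ)/1000 < δ := by
      have h6 : Real.log (5/4/δ) < 1/2 := by nlinarith
      have h7 : 5/4/δ < rexp (1/2) := by
        calc 5/4/δ = rexp (Real.log (5/4/δ)) := (Real.exp_log hqpos).symm
          _ < rexp (1/2) := Real.exp_lt_exp.2 h6
      rw [div_lt_iff₀ hδ] at h7
      nlinarith [Real.exp_pos ((1:ℝ)/2)]
    have half_eq : (1/2 : ℝ≥0∞) = ENNReal.ofReal (1/2) := by
      rw [ENNReal.ofReal_div_of_pos (by norm_num), ENNReal.ofReal_one, ENNReal.ofReal_ofNat]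
    rcases le_or_gt 0 (σ*ε - 1/(2*σ)) with hs0 | hs0
    · calc gaussianReal 0 1 (Ioi (σ*ε - 1/(2*σ))) ≤ gaussianReal 0 1 (Ioi (0:ℝ)) :=
            measure_mono (Ioi_subset_Ioi hs0)
        _ ≤ 1/2 := std_half
        _ ≤ ENNReal.ofReal δ := by
            rw [half_eq]
            exact ENNReal.ofReal_le_ofReal (by linarith)
    · refine (tail_neg _).trans ?_
      have hneg : -(σ*ε - 1/(2*σ)) ≤ 1/(2*L) - L := by linarith
      have hlog_lb : (1:ℝ)/5 ≤ Real.log (5/4/δ) := by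
        have h8 := Real.one_sub_inv_le_log_of_pos hqpos
        have h9 : ((5:ℝ)/4/δ)⁻¹ = δ * (4/5) := by
          rw [inv_div]; ring
        rw [h9] at h8
        linarith
      have hLlb : (63:ℝ)/100 ≤ L := by nlinarith
      have hub : 1/(2*L) - L ≤ 41/250 := by
        have h10 : 1/(2*L) ≤ 1/(63/50) := by
          rw [div_le_div_iff₀ (by linarith) (by norm_num)]; linarith
        have h11 : (1:ℝ)/(63/50) = 50/63 := by norm_num
        rw [h11] at h10
        have : (50:ℝ)/63 - 63/100 ≤ 41/250 := by norm_num
        linarith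
      have hsqrt2pi : (5:ℝ)/2 ≤ Real.sqrt (2*π) := by
        nlinarith [Real.sq_sqrt (by positivity : (0:ℝ) ≤ 2*π), Real.sqrt_nonneg (2*π),
          Real.pi_gt_d6]
      have hq0 : 0 ≤ (-(σ*ε - 1/(2*σ)))/Real.sqrt (2*π) :=
        div_nonneg (by linarith) (Real.sqrt_nonneg _)
      have hdiv : (-(σ*ε - 1/(2*σ)))/Real.sqrt (2*π) ≤ (41:ℝ)/625 := by
        calc (-(σ*ε - 1/(2*σ)))/Real.sqrt (2*π) ≤ (41/250)/(5/2) :=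
             div_le_div₀ (by norm_num) (hneg.trans hub) (by norm_num) hsqrt2pi
          _ = (41:ℝ)/625 := by norm_num
      rw [half_eq, ← ENNReal.ofReal_add (by norm_num) hq0]
      exact ENNReal.ofReal_le_ofReal (by linarith)

theorem gaussian_mechanism_dp
    (ε δ Δ σ : ℝ)
    (hε : 0 < ε) (hε1 : ε < 1)
    (hδ : 0 < δ) (hδ1 : δ < 1)
    (hΔ : 0 < Δ)
    (hσ : Real.sqrt (2 * Real.log (1.25 / δ)) / ε ≤ σ)
    (a b : ℝ) (hab : |a - b| ≤ Δ)
    (S : Set ℝ) (hS : MeasurableSet S) :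
    gaussianReal a (((Δ * σ) ^ 2).toNNReal) S ≤
      ENNReal.ofReal (Real.exp ε) * gaussianReal b (((Δ * σ) ^ 2).toNNReal) S +
        ENNReal.ofReal δ := by
  have hσpos : 0 < σ := by
    have hq : (1:ℝ) < 1.25/δ := (one_lt_div hδ).2 (by norm_num; linarith)
    have hlog : 0 < Real.log (1.25/δ) := Real.log_pos hq
    have hsq : 0 < Real.sqrt (2*Real.log (1.25/δ)) := Real.sqrt_pos.2 (by positivity)
    exact lt_of_lt_of_le (div_pos hsq hε) hσ
  have ht : 0 < Δ*σ := mul_pos hΔ hσpos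
  set v : ℝ≥0 := ((Δ*σ)^2).toNNReal with hvdef
  have hv : v ≠ 0 := (Real.toNNReal_pos.mpr (by positivity)).ne'
  have hvc : (v:ℝ) = (Δ*σ)^2 := Real.coe_toNNReal _ (sq_nonneg _)
  set G : Set ℝ := {x | (x-b)^2 - (x-a)^2 ≤ 2*(Δ*σ)^2*ε} with hGdef
  have hG : MeasurableSet G := measurableSet_le (by fun_prop) measurable_const
  -- good part
  have hgood : gaussianReal a v (S ∩ G) ≤ ENNReal.ofReal (rexp ε) * gaussianReal b v S := by
    have hpt : ∀ x ∈ S ∩ G, gaussianPDF a v x ≤ ENNReal.ofReal (rexp ε) * gaussianPDF b v x := by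
      intro x hx
      simp only [gaussianPDF]
      rw [← ENNReal.ofReal_mul (exp_nonneg _)]
      apply ENNReal.ofReal_le_ofReal
      simp only [gaussianPDFReal]
      rw [hvc]
      have h2t : (0:ℝ) < 2*(Δ*σ)^2 := by positivity
      have hxG : (x-b)^2-(x-a)^2 ≤ 2*(Δ*σ)^2*ε := hx.2
      have hdivle : ((x-b)^2-(x-a)^2)/(2*(Δ*σ)^2) ≤ ε := (div_le_iff₀ h2t).2 (by linarith)
      have hre : -(x-a)^2/(2*(Δ*σ)^2)
          = ((x-b)^2-(x-a)^2)/(2*(Δ*σ)^2) + -(x-b)^2/(2*(Δ*σ)^2) := by ring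
      have hee : -(x-a)^2/(2*(Δ*σ)^2) ≤ ε + -(x-b)^2/(2*(Δ*σ)^2) := by
        rw [hre]; linarith
      have hexp : rexp (-(x-a)^2/(2*(Δ*σ)^2)) ≤ rexp ε * rexp (-(x-b)^2/(2*(Δ*σ)^2)) := by
        rw [← Real.exp_add]; exact Real.exp_le_exp.2 hee
      calc (√(2*π*(Δ*σ)^2))⁻¹ * rexp (-(x-a)^2/(2*(Δ*σ)^2))
          ≤ (√(2*π*(Δ*σ)^2))⁻¹ * (rexp ε * rexp (-(x-b)^2/(2*(Δ*σ)^2))) := by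
            gcongr
        _ = rexp ε * ((√(2*π*(Δ*σ)^2))⁻¹ * rexp (-(x-b)^2/(2*(Δ*σ)^2))) := by ring
    calc gaussianReal a v (S ∩ G) = ∫⁻ x in S ∩ G, gaussianPDF a v x := gaussianReal_apply a hv _
      _ ≤ ∫⁻ x in S ∩ G, ENNReal.ofReal (rexp ε) * gaussianPDF b v x :=
          setLIntegral_mono ((measurable_gaussianPDF b v).const_mul _) hpt
      _ = ENNReal.ofReal (rexp ε) * ∫⁻ x in S ∩ G, gaussianPDF b v x :=
          lintegral_const_mul _ (measurable_gaussianPDF b v)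
      _ = ENNReal.ofReal (rexp ε) * gaussianReal b v (S ∩ G) := by
          rw [gaussianReal_apply b hv]
      _ ≤ ENNReal.ofReal (rexp ε) * gaussianReal b v S := by
          gcongr
          exact inter_subset_left
  -- bad part
  have hbad : gaussianReal a v Gᶜ ≤ ENNReal.ofReal δ := by
    have hmap : gaussianReal a v = Measure.map (fun z => (Δ*σ)*z + a) (gaussianReal 0 1) := by
      have h1 : (gaussianReal 0 1).map (fun z => (Δ*σ)*z) = gaussianReal 0 v := by
        have h0 := gaussianReal_map_const_mul (μ := 0) (v := 1) (Δ*σ)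
        have hveq : (⟨(Δ*σ)^2, sq_nonneg _⟩ : ℝ≥0) * 1 = v := by
          ext
          simp [hvc]
        rw [mul_zero] at h0
        rw [← hveq]
        exact h0
      have h2 : (gaussianReal 0 v).map (· + a) = gaussianReal a v := by
        have := gaussianReal_map_add_const (μ := 0) (v := v) a
        rwa [zero_add] at this
      rw [← h2, ← h1, Measure.map_map (measurable_add_const a) (measurable_const_mul _)]
      rfl
    rw [hmap, Measure.map_apply (by fun_prop) hG.compl]
    have hpre : (fun z => (Δ*σ)*z + a) ⁻¹' Gᶜ
        = {z : ℝ | 2*(Δ*σ)^2*ε < 2*(Δ*σ)*(a-b)*z + (a-b)^2} := by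
      ext z
      simp only [mem_preimage, mem_compl_iff, hGdef, mem_setOf_eq, not_le]
      constructor <;> intro h <;> nlinarith
    rw [hpre]
    rcases lt_trichotomy (a-b) 0 with hc | hc | hc
    · -- a - b < 0
      have huΔ : -(a-b) ≤ Δ := by
        have := abs_le.1 hab; linarith [this.1]
      have hset : {z : ℝ | 2*(Δ*σ)^2*ε < 2*(Δ*σ)*(a-b)*z + (a-b)^2}
          = Iio ((2*(Δ*σ)^2*ε - (a-b)^2)/(2*(Δ*σ)*(a-b))) := by
        ext z
        simp only [mem_setOf_eq, mem_Iio]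
        rw [lt_div_iff_of_neg (by nlinarith : 2*(Δ*σ)*(a-b) < 0)]
        constructor <;> intro h <;> nlinarith
      rw [hset, std_Iio]
      have hnegr : -((2*(Δ*σ)^2*ε - (a-b)^2)/(2*(Δ*σ)*(a-b)))
          = (2*(Δ*σ)^2*ε - (-(a-b))^2)/(2*(Δ*σ)*(-(a-b))) := by
        have e1 : (2*(Δ*σ)^2*ε - (-(a-b))^2) = (2*(Δ*σ)^2*ε - (a-b)^2) := by ring
        have e2 : (2*(Δ*σ)*(-(a-b))) = -(2*(Δ*σ)*(a-b)) := by ring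
        rw [e1, e2, div_neg]
      rw [hnegr]
      refine le_trans (measure_mono (Ioi_subset_Ioi
        (thresh rfl hσpos hΔ hε (by linarith) huΔ))) (final_tail hε hε1 hδ hδ1 hσ)
    · -- a = b
      have hset : {z : ℝ | 2*(Δ*σ)^2*ε < 2*(Δ*σ)*(a-b)*z + (a-b)^2} = (∅ : Set ℝ) := by
        ext z
        simp only [mem_setOf_eq, mem_empty_iff_false, iff_false, not_lt, hc]
        nlinarith
      rw [hset]
      simp
    · -- a - b > 0
      have huΔ : a-b ≤ Δ := (abs_le.1 hab).2
      have hset : {z : ℝ | 2*(Δ*σ)^2*ε < 2*(Δ*σ)*(a-b)*z + (a-b)^2}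
          = Ioi ((2*(Δ*σ)^2*ε - (a-b)^2)/(2*(Δ*σ)*(a-b))) := by
        ext z
        simp only [mem_setOf_eq, mem_Ioi]
        rw [div_lt_iff₀ (by positivity)]
        constructor <;> intro h <;> nlinarith
      rw [hset]
      refine le_trans (measure_mono (Ioi_subset_Ioi
        (thresh rfl hσpos hΔ hε hc huΔ))) (final_tail hε hε1 hδ hδ1 hσ)
  calc gaussianReal a v S ≤ gaussianReal a v (S ∩ G) + gaussianReal a v (S \ G) :=
      measure_le_inter_add_diff _ _ _
    _ ≤ ENNReal.ofReal (rexp ε) * gaussianReal b v S + ENNReal.ofReal δ := by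
      refine add_le_add hgood (le_trans (measure_mono ?_) hbad)
      intro x hx
      exact hx.2
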